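/- (Pressing down Lemma for generalized stationary sets.) Let X be a nonempty set, let S be a collection of subsets of X that is stationary in X, and let F be a regressive function on S, i.e. F(Z) ∈ Z for every Z ∈ S. Then there exist x ∈ X and T ⊆ S such that T is stationary in X and F(Z) = x for every Z ∈ T. -/

import Mathlib

/-- `Y` is closed under `f : Finset X → X`: whenever a finite set is contained in `Y`,
its `f`-image is in `Y`. -/
def ClosedUnder {X : Type*} (f : Finset X → X) (Y : Set X) : Prop :=
  ∀ s : Finset X, ↑s ⊆ Y → f s ∈ Y

/-- A collection `S` of subsets of `X` is stationary in `X` if it meets the set of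
closure points of every `f : Finset X → X`. -/
def IsStationaryIn {X : Type*} (S : Set (Set X)) : Prop :=
  ∀ f : Finset X → X, ∃ Y ∈ S, ClosedUnder f Y

section Aux

variable {X : Type*} (ψ : (Unit ⊕ X) ⊕ (X × Finset X) ↪ X)

/-- a distinguished "marker" element -/
noncomputable def pdW : X := ψ (Sum.inl (Sum.inl ()))

/-- an injective "copy" map -/
noncomputable def pdJ (y : X) : X := ψ (Sum.inl (Sum.inr y))

/-- an injective coding of pairs (element, finite set) -/
noncomputable def pdE (x : X) (t : Finset X) : X := ψ (Sum.inr (x, t))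

lemma pdW_ne_pdJ (y : X) : pdW ψ ≠ pdJ ψ y := fun h => by
  have := ψ.injective h; simp at this

lemma pdW_ne_pdE (x : X) (t : Finset X) : pdW ψ ≠ pdE ψ x t := fun h => by
  have := ψ.injective h; simp at this

lemma pdJ_ne_pdE (y x : X) (t : Finset X) : pdJ ψ y ≠ pdE ψ x t := fun h => by
  have := ψ.injective h; simp at this

lemma pdJ_inj {y y' : X} (h : pdJ ψ y = pdJ ψ y') : y = y' := by
  have := ψ.injective h; simpa using this

lemma pdE_inj {x x' : X} {t t' : Finset X} (h : pdE ψ x t = pdE ψ x' t') :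
    x = x' ∧ t = t' := by
  have := ψ.injective h; simpa [Prod.ext_iff] using this

variable [DecidableEq X]

open Classical in
/-- the universal function built from the family `f` -/
noncomputable def pdG (f : X → Finset X → X) : Finset X → X := fun s =>
  if h1 : ∃ y, s = {pdW ψ, y} then pdJ ψ h1.choose
  else if h2 : ∃ p : (X × Finset X) × X, s = {pdE ψ p.1.1 p.1.2, pdJ ψ p.2} then
    pdE ψ h2.choose.1.1 (insert h2.choose.2 h2.choose.1.2)
  else if h3 : ∃ p : X × Finset X, s = {pdE ψ p.1 p.2} then f h3.choose.1 h3.choose.2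
  else if h4 : ∃ y, s = {pdJ ψ y} then pdE ψ h4.choose ∅
  else pdW ψ

lemma pair_eq {a b c : X} (h : ({a, b} : Finset X) = {a, c}) : b = c := by
  have hb : b ∈ ({a, c} : Finset X) := by
    rw [← h]; exact Finset.mem_insert_of_mem (Finset.mem_singleton_self b)
  have hc : c ∈ ({a, b} : Finset X) := by
    rw [h]; exact Finset.mem_insert_of_mem (Finset.mem_singleton_self c)
  simp only [Finset.mem_insert, Finset.mem_singleton] at hb hc
  rcases hb with hb | hb
  · rcases hc with hc | hc
    · rw [hb, hc]
    · exact hc.symm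
  · exact hb

variable (f : X → Finset X → X)

lemma pdG_empty : pdG ψ f ∅ = pdW ψ := by
  unfold pdG
  have hn1 : ¬∃ y, (∅ : Finset X) = {pdW ψ, y} := by
    rintro ⟨y, hy⟩; exact Finset.insert_ne_empty _ _ hy.symm
  have hn2 : ¬∃ p : (X × Finset X) × X, (∅ : Finset X) = {pdE ψ p.1.1 p.1.2, pdJ ψ p.2} := by
    rintro ⟨p, hp⟩; exact Finset.insert_ne_empty _ _ hp.symm
  have hn3 : ¬∃ p : X × Finset X, (∅ : Finset X) = {pdE ψ p.1 p.2} := by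
    rintro ⟨p, hp⟩; exact Finset.singleton_ne_empty _ hp.symm
  have hn4 : ¬∃ y, (∅ : Finset X) = {pdJ ψ y} := by
    rintro ⟨y, hy⟩; exact Finset.singleton_ne_empty _ hy.symm
  rw [dif_neg hn1, dif_neg hn2, dif_neg hn3, dif_neg hn4]

lemma pdG_pair (y : X) : pdG ψ f {pdW ψ, y} = pdJ ψ y := by
  unfold pdG
  have h1 : ∃ c, ({pdW ψ, y} : Finset X) = {pdW ψ, c} := ⟨y, rfl⟩
  rw [dif_pos h1]
  exact congrArg (pdJ ψ) (pair_eq h1.choose_spec).symm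

lemma pdG_code (x : X) (t : Finset X) (y : X) :
    pdG ψ f {pdE ψ x t, pdJ ψ y} = pdE ψ x (insert y t) := by
  unfold pdG
  have h2 : ∃ p : (X × Finset X) × X,
      ({pdE ψ x t, pdJ ψ y} : Finset X) = {pdE ψ p.1.1 p.1.2, pdJ ψ p.2} := ⟨((x, t), y), rfl⟩
  have hn1 : ¬∃ d, ({pdE ψ x t, pdJ ψ y} : Finset X) = {pdW ψ, d} := by
    rintro ⟨d, hd⟩
    have hmem : pdW ψ ∈ ({pdE ψ x t, pdJ ψ y} : Finset X) := by
      rw [hd]; exact Finset.mem_insert_self _ _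
    simp only [Finset.mem_insert, Finset.mem_singleton] at hmem
    rcases hmem with h | h
    · exact pdW_ne_pdE ψ x t h
    · exact pdW_ne_pdJ ψ y h
  rw [dif_neg hn1, dif_pos h2]
  have hspec := h2.choose_spec
  have hxt : pdE ψ x t ∈ ({pdE ψ h2.choose.1.1 h2.choose.1.2, pdJ ψ h2.choose.2} : Finset X) := by
    rw [← hspec]; exact Finset.mem_insert_self _ _
  have hyy : pdJ ψ y ∈ ({pdE ψ h2.choose.1.1 h2.choose.1.2, pdJ ψ h2.choose.2} : Finset X) := by
    rw [← hspec]; exact Finset.mem_insert_of_mem (Finset.mem_singleton_self _)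
  simp only [Finset.mem_insert, Finset.mem_singleton] at hxt hyy
  rcases hxt with hxt | hxt
  · rcases hyy with hyy | hyy
    · exact absurd hyy (pdJ_ne_pdE ψ y _ _)
    · obtain ⟨hax, hbt⟩ := pdE_inj ψ hxt
      rw [← hax, ← hbt, ← pdJ_inj ψ hyy]
  · exact absurd hxt.symm (pdJ_ne_pdE ψ _ x t)

lemma pdG_single_e (x : X) (t : Finset X) : pdG ψ f {pdE ψ x t} = f x t := by
  unfold pdG
  have h3 : ∃ p : X × Finset X, ({pdE ψ x t} : Finset X) = {pdE ψ p.1 p.2} := ⟨(x, t), rfl⟩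
  have hn1 : ¬∃ d, ({pdE ψ x t} : Finset X) = {pdW ψ, d} := by
    rintro ⟨d, hd⟩
    have hmem : pdW ψ ∈ ({pdE ψ x t} : Finset X) := by
      rw [hd]; exact Finset.mem_insert_self _ _
    simp only [Finset.mem_singleton] at hmem
    exact pdW_ne_pdE ψ x t hmem
  have hn2 : ¬∃ p : (X × Finset X) × X, ({pdE ψ x t} : Finset X) = {pdE ψ p.1.1 p.1.2, pdJ ψ p.2} := by
    rintro ⟨p, hp⟩
    have hmem : pdJ ψ p.2 ∈ ({pdE ψ x t} : Finset X) := by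
      rw [hp]; exact Finset.mem_insert_of_mem (Finset.mem_singleton_self _)
    simp only [Finset.mem_singleton] at hmem
    exact pdJ_ne_pdE ψ p.2 x t hmem
  rw [dif_neg hn1, dif_neg hn2, dif_pos h3]
  have hspec := h3.choose_spec
  have heq := Finset.singleton_injective hspec
  obtain ⟨hx, ht⟩ := pdE_inj ψ heq
  rw [← hx, ← ht]

lemma pdG_single_j (y : X) : pdG ψ f {pdJ ψ y} = pdE ψ y ∅ := by
  unfold pdG
  have h4 : ∃ c, ({pdJ ψ y} : Finset X) = {pdJ ψ c} := ⟨y, rfl⟩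
  have hn1 : ¬∃ d, ({pdJ ψ y} : Finset X) = {pdW ψ, d} := by
    rintro ⟨d, hd⟩
    have hmem : pdW ψ ∈ ({pdJ ψ y} : Finset X) := by
      rw [hd]; exact Finset.mem_insert_self _ _
    simp only [Finset.mem_singleton] at hmem
    exact pdW_ne_pdJ ψ y hmem
  have hn2 : ¬∃ p : (X × Finset X) × X, ({pdJ ψ y} : Finset X) = {pdE ψ p.1.1 p.1.2, pdJ ψ p.2} := by
    rintro ⟨p, hp⟩
    have hmem : pdE ψ p.1.1 p.1.2 ∈ ({pdJ ψ y} : Finset X) := by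
      rw [hp]; exact Finset.mem_insert_self _ _
    simp only [Finset.mem_singleton] at hmem
    exact pdJ_ne_pdE ψ y p.1.1 p.1.2 hmem.symm
  have hn3 : ¬∃ p : X × Finset X, ({pdJ ψ y} : Finset X) = {pdE ψ p.1 p.2} := by
    rintro ⟨p, hp⟩
    have hmem : pdE ψ p.1 p.2 ∈ ({pdJ ψ y} : Finset X) := by
      rw [hp]; exact Finset.mem_singleton_self _
    simp only [Finset.mem_singleton] at hmem
    exact pdJ_ne_pdE ψ y p.1 p.2 hmem.symm
  rw [dif_neg hn1, dif_neg hn2, dif_neg hn3, dif_pos h4]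
  have hspec := h4.choose_spec
  have heq := Finset.singleton_injective hspec
  rw [← pdJ_inj ψ heq]

end Aux

/-- For infinite `X`, any `X`-indexed family of functions can be captured by a single
function: every set closed under `g` is closed under `f x` for each of its elements. -/
lemma exists_universal {X : Type*} [Infinite X] (f : X → Finset X → X) :
    ∃ g : Finset X → X, ∀ Y : Set X, ClosedUnder g Y → ∀ x ∈ Y, ClosedUnder (f x) Y := by
  classical
  obtain ⟨ψ⟩ : Nonempty ((Unit ⊕ X) ⊕ (X × Finset X) ↪ X) := by
    rw [← Cardinal.le_def]
    have hfin : Cardinal.mk (Finset X) = Cardinal.mk X := Cardinal.mk_finset_of_infinite X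
    have hX : Cardinal.aleph0 ≤ Cardinal.mk X := Cardinal.aleph0_le_mk X
    simp only [Cardinal.mk_sum, Cardinal.mk_prod, Cardinal.lift_id, Cardinal.lift_uzero,
      Cardinal.lift_one, hfin, Cardinal.mul_eq_self hX, Cardinal.mk_punit]
    calc 1 + Cardinal.mk X + Cardinal.mk X
        ≤ Cardinal.mk X + Cardinal.mk X + Cardinal.mk X := by
          gcongr; exact Cardinal.one_le_iff_ne_zero.mpr (Cardinal.mk_ne_zero X)
      _ = Cardinal.mk X := by rw [Cardinal.add_eq_self hX, Cardinal.add_eq_self hX]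
  refine ⟨pdG ψ f, fun Y hY x hx s hs => ?_⟩
  have hw : pdW ψ ∈ Y := by
    have := hY ∅ (by simp); rwa [pdG_empty] at this
  have hj : ∀ y ∈ Y, pdJ ψ y ∈ Y := by
    intro y hy
    have := hY {pdW ψ, y} (by simp [Set.insert_subset_iff, hw, hy])
    rwa [pdG_pair] at this
  have he : ∀ t : Finset X, ↑t ⊆ Y → pdE ψ x t ∈ Y := by
    intro t
    induction t using Finset.induction_on with
    | empty =>
      intro _
      have := hY {pdJ ψ x} (by simp [hj x hx])
      rwa [pdG_single_j] at this
    | @insert a t ha ih =>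
      intro hins
      rw [Finset.coe_insert, Set.insert_subset_iff] at hins
      have h1 := ih hins.2
      have := hY {pdE ψ x t, pdJ ψ a} (by simp [Set.insert_subset_iff, h1, hj a hins.1])
      rwa [pdG_code] at this
  have := hY {pdE ψ x s} (by simp [he s hs])
  rwa [pdG_single_e] at this

open Classical in
/-- a function with no proper closed subsets over a finite type -/
noncomputable def pdFin {X : Type*} [Nonempty X] : Finset X → X := fun s =>
  if h : ∃ x : X, x ∉ s then h.choose else Classical.arbitrary X

lemma pdFin_spec {X : Type*} [Nonempty X] (s : Finset X) (h : ∃ x : X, x ∉ s) :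
    pdFin s ∉ s := by
  unfold pdFin; rw [dif_pos h]; exact h.choose_spec

theorem pressing_down {X : Type*} [Nonempty X] (S : Set (Set X))
    (hS : IsStationaryIn S) (F : Set X → X) (hF : ∀ Z ∈ S, F Z ∈ Z) :
    ∃ (x : X) (T : Set (Set X)), T ⊆ S ∧ IsStationaryIn T ∧ ∀ Z ∈ T, F Z = x := by
  classical
  by_cases hfin : Finite X
  · -- finite case: the only closed set is `univ`, so `univ ∈ S` and `{univ}` works
    obtain ⟨Y, hYS, hYc⟩ := hS pdFin
    have hYuniv : Y = Set.univ := by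
      by_contra hne
      obtain ⟨x, hx⟩ : ∃ x, x ∉ Y := by
        by_contra h; push_neg at h; exact hne (Set.eq_univ_of_forall h)
      have hfinY : Y.Finite := Set.toFinite Y
      have hsub : ↑hfinY.toFinset ⊆ Y := by simp
      have hmem := hYc hfinY.toFinset hsub
      have hnot := pdFin_spec hfinY.toFinset ⟨x, by simpa using hx⟩
      exact hnot (by simpa using hmem)
    refine ⟨F Y, {Y}, by simpa using hYS, ?_, by simp⟩
    intro f'
    exact ⟨Y, rfl, fun s _ => by rw [hYuniv]; trivial⟩
  · -- infinite case
    have : Infinite X := by rwa [not_finite_iff_infinite] at hfin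
    by_contra hcon
    push_neg at hcon
    have hT : ∀ x : X, ∃ fx : Finset X → X, ∀ Z ∈ S, F Z = x → ¬ ClosedUnder fx Z := by
      intro x
      by_contra h
      push_neg at h
      have hsub : {Z | Z ∈ S ∧ F Z = x} ⊆ S := fun Z hZ => hZ.1
      have hstat : IsStationaryIn {Z | Z ∈ S ∧ F Z = x} := by
        intro f'
        obtain ⟨Z, hZS, hFZ, hcl⟩ := h f'
        exact ⟨Z, ⟨hZS, hFZ⟩, hcl⟩
      obtain ⟨Z, hZT, hne⟩ := hcon x {Z | Z ∈ S ∧ F Z = x} hsub hstat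
      exact hne hZT.2
    choose fx hfx using hT
    obtain ⟨g, hg⟩ := exists_universal fx
    obtain ⟨Y, hYS, hYc⟩ := hS g
    exact hfx (F Y) Y hYS rfl (hg Y hYc (F Y) (hF Y hYS))
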